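/- In a channel-compliant word, the matching relation between send and receive events on a fixed channel (P,Q) is a bijection between the matched sends and the receives: the k-th send event snd(P,Q,_) is matched by the k-th receive event rcv(P,Q,_) whenever the latter exists, and each receive event rcv(P,Q,_) matches exactly one send event. -/

import Mathlib

/-- Events: `snd P Q m` is process `P` sending message `m` to `Q`;
    `rcv P Q m` is process `Q` receiving message `m` from `P`. -/
inductive Ev where
  | snd : ℕ → ℕ → ℕ → Ev
  | rcv : ℕ → ℕ → ℕ → Ev
deriving DecidableEq

/-- Message values of send events on channel (P,Q) in w. -/
def sends (w : List Ev) (P Q : ℕ) : List ℕ :=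
  w.filterMap fun e => match e with
    | .snd p q m => if p = P ∧ q = Q then some m else none
    | _ => none

/-- Message values of receive events on channel (P,Q) in w. -/
def recvs (w : List Ev) (P Q : ℕ) : List ℕ :=
  w.filterMap fun e => match e with
    | .rcv p q m => if p = P ∧ q = Q then some m else none
    | _ => none

def channelCompliant (w : List Ev) : Prop :=
  ∀ u, u <+: w → ∀ P Q, recvs u P Q <+: sends u P Q

def complete (w : List Ev) : Prop :=
  ∀ P Q, sends w P Q = recvs w P Q

def bounded (B : ℕ) (w : List Ev) : Prop :=
  ∀ u, u <+: w → ∀ P Q, (sends u P Q).length ≤ (recvs u P Q).length + B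

def halfDuplex (w : List Ev) : Prop :=
  ∀ u, u <+: w → ∀ P Q,
    sends u P Q = recvs u P Q ∨ sends u Q P = recvs u Q P

/-- Send at position i on channel (P,Q) is matched by receive at position j. -/
def Matches (w : List Ev) (P Q i j : ℕ) : Prop :=
  i < j ∧ j < w.length ∧
  (∃ m, w[i]? = some (.snd P Q m) ∧ w[j]? = some (.rcv P Q m)) ∧
  sends (w.take (i+1)) P Q = recvs (w.take (j+1)) P Q

def IsSendAt (w : List Ev) (P Q i : ℕ) : Prop := ∃ m, w[i]? = some (Ev.snd P Q m)
def IsRcvAt (w : List Ev) (P Q i : ℕ) : Prop := ∃ m, w[i]? = some (Ev.rcv P Q m)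
def MatchedAt (w : List Ev) (P Q i : ℕ) : Prop := ∃ j, Matches w P Q i j

/-- The process performing the event. -/
def actor : Ev → ℕ
  | .snd p _ _ => p
  | .rcv _ q _ => q

/-- Projection of a word onto the events of process X. -/
def proj (w : List Ev) (X : ℕ) : List Ev := w.filter (fun e => actor e == X)

/-- Two words induce the same MSC (same per-process orders; with FIFO matching,
    this determines the matching). -/
def sameMSC (w v : List Ev) : Prop := ∀ X, proj w X = proj v X

/-- Existentially B-bounded: some linearisation of msc(w) is B-bounded. -/
def existBounded (B : ℕ) (w : List Ev) : Prop :=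
  ∃ v, channelCompliant v ∧ sameMSC w v ∧ bounded B v

def isSnd : Ev → Prop
  | .snd _ _ _ => True
  | _ => False

def isRcv : Ev → Prop
  | .rcv _ _ _ => True
  | _ => False

/-- Positions i and j lie in the same block of the block decomposition. -/
def SameBlock (blocks : List (List Ev)) (i j : ℕ) : Prop :=
  ∃ t, ((blocks.take t).flatten).length ≤ i ∧ j < ((blocks.take (t+1)).flatten).length

/-- w is k-synchronisable: some linearisation of msc(w) splits into blocks of
    at most k sends followed by at most k receives, with matched pairs co-located. -/
def kSynchronisable (k : ℕ) (w : List Ev) : Prop :=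
  ∃ blocks : List (List Ev),
    channelCompliant blocks.flatten ∧ sameMSC w blocks.flatten ∧
    (∀ b ∈ blocks, ∃ s r, b = s ++ r ∧ s.length ≤ k ∧ r.length ≤ k ∧
      (∀ e ∈ s, isSnd e) ∧ (∀ e ∈ r, isRcv e)) ∧
    (∀ P Q i j, Matches blocks.flatten P Q i j → SameBlock blocks i j)

/-- One step of the indistinguishability relation ∼. -/
inductive Sim1 : List Ev → List Ev → Prop
  | ss (u v : List Ev) (P Q R S m m' : ℕ) (h : P ≠ R) :
      Sim1 (u ++ Ev.snd P Q m :: Ev.snd R S m' :: v)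
           (u ++ Ev.snd R S m' :: Ev.snd P Q m :: v)
  | rr (u v : List Ev) (P Q R S m m' : ℕ) (h : Q ≠ S) :
      Sim1 (u ++ Ev.rcv P Q m :: Ev.rcv R S m' :: v)
           (u ++ Ev.rcv R S m' :: Ev.rcv P Q m :: v)
  | sr (u v : List Ev) (P Q R S m m' : ℕ) (h1 : P ≠ S) (h2 : P ≠ R ∨ Q ≠ S) :
      Sim1 (u ++ Ev.snd P Q m :: Ev.rcv R S m' :: v)
           (u ++ Ev.rcv R S m' :: Ev.snd P Q m :: v)
  | srSame (u v : List Ev) (P Q m m' : ℕ)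
      (h : (recvs u P Q).length < (sends u P Q).length) :
      Sim1 (u ++ Ev.snd P Q m :: Ev.rcv P Q m' :: v)
           (u ++ Ev.rcv P Q m' :: Ev.snd P Q m :: v)

/-- The indistinguishability relation ∼ (finitely many swaps). -/
def Sim : List Ev → List Ev → Prop := Relation.ReflTransGen Sim1

def isSndB (P Q : ℕ) : Ev → Bool
  | .snd p q _ => p == P && q == Q
  | _ => false

def isRcvB (P Q : ℕ) : Ev → Bool
  | .rcv p q _ => p == P && q == Q
  | _ => false

/-- Positions of send events on channel (P,Q) in w, in order. -/
def sendPos (w : List Ev) (P Q : ℕ) : List ℕ :=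
  (List.range w.length).filter fun i =>
    match w[i]? with
    | some e => isSndB P Q e
    | none => false

/-- Positions of receive events on channel (P,Q) in w, in order. -/
def rcvPos (w : List Ev) (P Q : ℕ) : List ℕ :=
  (List.range w.length).filter fun i =>
    match w[i]? with
    | some e => isRcvB P Q e
    | none => false

lemma frange_prefix (p : ℕ → Bool) {m n : ℕ} (h : m ≤ n) :
    (List.range m).filter p <+: (List.range n).filter p := by
  apply List.IsPrefix.filter
  have : (List.range n).take m = List.range m := by
    simp [List.take_range, Nat.min_eq_left h]
  rw [← this]; exact List.take_prefix _ _

lemma frange_succ (p : ℕ → Bool) (i : ℕ) :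
    (List.range (i+1)).filter p
      = (List.range i).filter p ++ if p i then [i] else [] := by
  rw [List.range_succ, List.filter_append]
  congr 1
  simp [List.filter_singleton]

lemma frange_getElem {p : ℕ → Bool} {n k i : ℕ}
    (h : ((List.range n).filter p)[k]? = some i) :
    i < n ∧ p i = true ∧ ((List.range i).filter p).length = k := by
  have hmem := List.mem_of_getElem? h
  rw [List.mem_filter, List.mem_range] at hmem
  obtain ⟨hin, hp⟩ := hmem
  refine ⟨hin, hp, ?_⟩
  obtain ⟨r, hr⟩ := frange_prefix p (show i+1 ≤ n from hin)
  have hdec : (List.range n).filter p = (List.range i).filter p ++ (i :: r) := by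
    rw [← hr, frange_succ, hp]; simp
  have hidx : ((List.range n).filter p)[((List.range i).filter p).length]? = some i := by
    rw [hdec, List.getElem?_append_right (le_refl _)]
    simp
  have hk : k < ((List.range n).filter p).length := by
    by_contra hc
    rw [List.getElem?_eq_none (by omega)] at h
    cases h
  exact (List.getElem?_inj hk ((List.nodup_range (n := n)).filter p) |>.mp (h.trans hidx.symm)).symm

lemma sends_append' (u v : List Ev) (P Q : ℕ) :
    sends (u ++ v) P Q = sends u P Q ++ sends v P Q := List.filterMap_append

lemma recvs_append' (u v : List Ev) (P Q : ℕ) :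
    recvs (u ++ v) P Q = recvs u P Q ++ recvs v P Q := List.filterMap_append

lemma sends_prefix' {u v : List Ev} (P Q : ℕ) (h : u <+: v) :
    sends u P Q <+: sends v P Q := h.filterMap _

lemma recvs_prefix' {u v : List Ev} (P Q : ℕ) (h : u <+: v) :
    recvs u P Q <+: recvs v P Q := h.filterMap _

lemma length_sends (u : List Ev) (P Q : ℕ) :
    (sends u P Q).length = (u.filter (isSndB P Q)).length := by
  induction u with
  | nil => rfl
  | cons e u ih =>
    cases e with
    | snd p q m =>
      by_cases hpq : p = P ∧ q = Q
      · simp [sends, isSndB, List.filter_cons, hpq, hpq.1, hpq.2] at *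
        simpa [sends] using ih
      · have hb : isSndB P Q (Ev.snd p q m) = false := by
          simp [isSndB]; intro h1 h2; exact hpq ⟨h1, h2⟩
        simp [sends, List.filter_cons, hpq, hb] at *
        simpa [sends] using ih
    | rcv p q m =>
      simp [sends, List.filter_cons, isSndB] at *
      simpa [sends] using ih

lemma length_recvs (u : List Ev) (P Q : ℕ) :
    (recvs u P Q).length = (u.filter (isRcvB P Q)).length := by
  induction u with
  | nil => rfl
  | cons e u ih =>
    cases e with
    | rcv p q m =>
      by_cases hpq : p = P ∧ q = Q
      · simp [recvs, isRcvB, List.filter_cons, hpq, hpq.1, hpq.2] at *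
        simpa [recvs] using ih
      · have hb : isRcvB P Q (Ev.rcv p q m) = false := by
          simp [isRcvB]; intro h1 h2; exact hpq ⟨h1, h2⟩
        simp [recvs, List.filter_cons, hpq, hb] at *
        simpa [recvs] using ih
    | snd p q m =>
      simp [recvs, List.filter_cons, isRcvB] at *
      simpa [recvs] using ih

lemma cnt_link (w : List Ev) (q : Ev → Bool) :
    ∀ n, n ≤ w.length →
    ((List.range n).filter (fun i => match w[i]? with
        | some e => q e | none => false)).length
      = ((w.take n).filter q).length := by
  intro n
  induction n with
  | zero => simp
  | succ n ih =>
    intro hn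
    rw [List.range_succ, List.filter_append, List.length_append,
      List.take_succ, List.filter_append, List.length_append, ih (by omega)]
    congr 1
    have : w[n]? = some w[n] := List.getElem?_eq_getElem (by omega)
    simp [this, List.filter_singleton]
    cases q w[n] <;> simp

lemma take_take_prefix' {α : Type*} {a b : ℕ} (h : a ≤ b) (w : List α) :
    w.take a <+: w.take b := by
  rw [show w.take a = (w.take b).take a by rw [List.take_take, Nat.min_eq_left h]]
  exact List.take_prefix _ _

lemma sends_snd_singleton (P Q m : ℕ) : sends [Ev.snd P Q m] P Q = [m] := by
  simp [sends]

lemma recvs_rcv_singleton (P Q m : ℕ) : recvs [Ev.rcv P Q m] P Q = [m] := by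
  simp [recvs]

lemma sendPos_spec {w : List Ev} {P Q k i : ℕ}
    (h : (sendPos w P Q)[k]? = some i) :
    ∃ m, w[i]? = some (.snd P Q m) ∧
      (sends (w.take i) P Q).length = k ∧
      sends (w.take (i+1)) P Q = sends (w.take i) P Q ++ [m] ∧ i < w.length := by
  unfold sendPos at h
  obtain ⟨hin, hp, hlen⟩ := frange_getElem h
  have hwi : w[i]? = some w[i] := List.getElem?_eq_getElem hin
  rw [hwi] at hp
  cases hev : w[i] with
  | rcv p q m => rw [hev] at hp; simp [isSndB] at hp
  | snd p q m =>
    rw [hev] at hp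
    simp only [isSndB, Bool.and_eq_true, beq_iff_eq] at hp
    obtain ⟨rfl, rfl⟩ := hp
    refine ⟨m, by rw [hwi, hev], ?_, ?_, hin⟩
    · rw [← hlen, cnt_link w (isSndB p q) i (le_of_lt hin), length_sends]
    · rw [List.take_succ, hwi, hev, Option.toList_some, sends_append',
        sends_snd_singleton]

lemma rcvPos_spec {w : List Ev} {P Q k j : ℕ}
    (h : (rcvPos w P Q)[k]? = some j) :
    ∃ m, w[j]? = some (.rcv P Q m) ∧
      (recvs (w.take j) P Q).length = k ∧
      recvs (w.take (j+1)) P Q = recvs (w.take j) P Q ++ [m] ∧ j < w.length := by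
  unfold rcvPos at h
  obtain ⟨hin, hp, hlen⟩ := frange_getElem h
  have hwj : w[j]? = some w[j] := List.getElem?_eq_getElem hin
  rw [hwj] at hp
  cases hev : w[j] with
  | snd p q m => rw [hev] at hp; simp [isRcvB] at hp
  | rcv p q m =>
    rw [hev] at hp
    simp only [isRcvB, Bool.and_eq_true, beq_iff_eq] at hp
    obtain ⟨rfl, rfl⟩ := hp
    refine ⟨m, by rw [hwj, hev], ?_, ?_, hin⟩
    · rw [← hlen, cnt_link w (isRcvB p q) j (le_of_lt hin), length_recvs]
    · rw [List.take_succ, hwj, hev, Option.toList_some, recvs_append',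
        recvs_rcv_singleton]

lemma sendPos_length (w : List Ev) (P Q : ℕ) :
    (sendPos w P Q).length = (sends w P Q).length := by
  unfold sendPos
  rw [cnt_link w (isSndB P Q) w.length le_rfl, List.take_length, length_sends]

lemma rcvPos_length (w : List Ev) (P Q : ℕ) :
    (rcvPos w P Q).length = (recvs w P Q).length := by
  unfold rcvPos
  rw [cnt_link w (isRcvB P Q) w.length le_rfl, List.take_length, length_recvs]

lemma part1 (w : List Ev) (P Q : ℕ) (h : channelCompliant w)
    (k i j : ℕ) (hi : (sendPos w P Q)[k]? = some i)
    (hj : (rcvPos w P Q)[k]? = some j) : Matches w P Q i j := by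
  obtain ⟨m, hsi, hcsi, hdecS, hiw⟩ := sendPos_spec hi
  obtain ⟨m', hrj, hcrj, hdecR, hjw⟩ := rcvPos_spec hj
  have hlenS1 : (sends (w.take (i+1)) P Q).length = k+1 := by
    rw [hdecS]; simp [hcsi]
  have hlenR1 : (recvs (w.take (j+1)) P Q).length = k+1 := by
    rw [hdecR]; simp [hcrj]
  have hSeq : sends (w.take (i+1)) P Q = (sends w P Q).take (k+1) := by
    obtain ⟨t, ht⟩ := sends_prefix' P Q (List.take_prefix (i+1) w)
    rw [← ht, List.take_append_of_le_length (le_of_eq hlenS1.symm),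
      List.take_of_length_le (le_of_eq hlenS1)]
  have hReq : recvs (w.take (j+1)) P Q = (recvs w P Q).take (k+1) := by
    obtain ⟨t, ht⟩ := recvs_prefix' P Q (List.take_prefix (j+1) w)
    rw [← ht, List.take_append_of_le_length (le_of_eq hlenR1.symm),
      List.take_of_length_le (le_of_eq hlenR1)]
  have hc : recvs w P Q <+: sends w P Q := h w (List.prefix_refl w) P Q
  have hkr : k+1 ≤ (recvs w P Q).length := by
    have := (recvs_prefix' P Q (List.take_prefix (j+1) w)).length_le
    omega
  have htk : (recvs w P Q).take (k+1) = (sends w P Q).take (k+1) := by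
    obtain ⟨t, ht⟩ := hc
    rw [← ht, List.take_append_of_le_length hkr]
  have hkey : sends (w.take (i+1)) P Q = recvs (w.take (j+1)) P Q := by
    rw [hSeq, hReq, htk]
  have hmm : m = m' := by
    have h2 : sends (w.take i) P Q ++ [m] = recvs (w.take j) P Q ++ [m'] := by
      rw [← hdecS, ← hdecR, hkey]
    have h3 := congrArg List.getLast? h2
    simpa [List.getLast?_concat] using h3
  have hij : i < j := by
    by_contra hle
    push_neg at hle
    have hc2 := (h (w.take (j+1)) (List.take_prefix _ _) P Q).length_le
    have hsj1 : sends (w.take (j+1)) P Q = sends (w.take j) P Q := by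
      rw [List.take_succ, hrj, Option.toList_some, sends_append']
      simp [sends]
    have hmono := (sends_prefix' P Q (take_take_prefix' hle w)).length_le
    rw [hsj1, hlenR1] at hc2
    omega
  exact ⟨hij, hjw, ⟨m, hsi, hmm ▸ hrj⟩, hkey⟩

/-- in a channel-compliant word, the k-th send on channel (P,Q)
    is matched by the k-th receive (whenever the latter exists), and each
    receive matches exactly one send. -/
theorem matching_is_bijection (w : List Ev) (P Q : ℕ)
    (h : channelCompliant w) :
    (∀ k i j : ℕ, (sendPos w P Q)[k]? = some i → (rcvPos w P Q)[k]? = some j →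
      Matches w P Q i j) ∧
    (∀ j ∈ rcvPos w P Q, ∃! i, Matches w P Q i j) := by
  constructor
  · exact fun k i j hi hj => part1 w P Q h k i j hi hj
  · intro j hjmem
    obtain ⟨k, hjk⟩ := List.getElem?_of_mem hjmem
    have hklt : k < (rcvPos w P Q).length := by
      by_contra hc
      rw [List.getElem?_eq_none (by omega)] at hjk
      cases hjk
    have hks : k < (sendPos w P Q).length := by
      have h1 := rcvPos_length w P Q
      have h2 := sendPos_length w P Q
      have h3 := (h w (List.prefix_refl w) P Q).length_le
      omega
    have hik : (sendPos w P Q)[k]? = some (sendPos w P Q)[k] :=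
      List.getElem?_eq_getElem hks
    set i := (sendPos w P Q)[k] with hidef
    have hm := part1 w P Q h k i j hik hjk
    refine ⟨i, hm, ?_⟩
    intro i' hm'
    obtain ⟨m, hsi, hcsi, hdecS, hiw⟩ := sendPos_spec hik
    obtain ⟨m', hrj, hcrj, hdecR, hjw⟩ := rcvPos_spec hjk
    obtain ⟨hij', hjw', ⟨m'', hsi'', hrj''⟩, hkey'⟩ := hm'
    have hdecS' : sends (w.take (i'+1)) P Q = sends (w.take i') P Q ++ [m''] := by
      rw [List.take_succ, hsi'', Option.toList_some, sends_append',
        sends_snd_singleton]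
    have hlenR1 : (recvs (w.take (j+1)) P Q).length = k+1 := by
      rw [hdecR]; simp [hcrj]
    have hci' : (sends (w.take i') P Q).length = k := by
      have := congrArg List.length hkey'
      rw [hdecS', hlenR1] at this
      simp at this
      omega
    have hci1' : (sends (w.take (i'+1)) P Q).length = k+1 := by
      rw [hdecS']; simp [hci']
    have hci1 : (sends (w.take (i+1)) P Q).length = k+1 := by
      rw [hdecS]; simp [hcsi]
    rcases lt_trichotomy i' i with hlt | heq | hgt
    · have hmono := (sends_prefix' P Q (take_take_prefix' (show i'+1 ≤ i by omega) w)).length_le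
      omega
    · exact heq
    · have hmono := (sends_prefix' P Q (take_take_prefix' (show i+1 ≤ i' by omega) w)).length_le
      omega
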